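/- Unique maximizer on small balls: let Ω ⊂ ℝ^N be a bounded domain and u ∈ C²(closure Ω) with |∇u| ≥ c > 0 on closure Ω. Let Λ_max be the supremum of the largest eigenvalue of the Hessian ∇²u over Ω. If 0 < ε < c/Λ_max is sufficiently small, then for every x ∈ Ω with dist(x, ∂Ω) > ε, the maximum of u over the closed ball of radius ε around x is attained at a unique point y*, and this point satisfies |y* − x| = ε and ∇u(y*) = λ*(y* − x) with λ* = |∇u(y*)|/ε. -/

import Mathlib

open MeasureTheory Metric InnerProductSpace Set Topology Filter

local notation "⟪" x ", " y "⟫" => @inner ℝ _ _ x y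

private lemma fderiv_apply_eq {N : ℕ} (u : EuclideanSpace ℝ (Fin N) → ℝ)
    (z w : EuclideanSpace ℝ (Fin N)) :
    fderiv ℝ u z w = ⟪gradient u z, w⟫ := by
  simp only [gradient, InnerProductSpace.toDual_symm_apply]

/-- Second-order Taylor upper bound along a segment contained in `Ω`. -/
private lemma taylor_upper {N : ℕ} (Ω : Set (EuclideanSpace ℝ (Fin N))) (hΩopen : IsOpen Ω)
    (u : EuclideanSpace ℝ (Fin N) → ℝ) (hu : ContDiffOn ℝ 2 u (closure Ω))
    (Λ : ℝ)
    (hΛ : ∀ x ∈ Ω, ∀ v : EuclideanSpace ℝ (Fin N),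
      (inner ℝ (fderiv ℝ (gradient u) x v) v : ℝ) ≤ Λ * ‖v‖ ^ 2)
    {y z : EuclideanSpace ℝ (Fin N)}
    (hseg : ∀ t ∈ Icc (0:ℝ) 1, y + t • (z - y) ∈ Ω) :
    u z ≤ u y + ⟪gradient u y, z - y⟫ + Λ / 2 * ‖z - y‖ ^ 2 := by
  set d := z - y with hdd
  set γ : ℝ → EuclideanSpace ℝ (Fin N) := fun t => y + t • d with hγdef
  have hγ0 : γ 0 = y := by simp [hγdef]
  have hγ1 : γ 1 = z := by simp [hγdef, hdd]
  have hC2 : ∀ t ∈ Icc (0:ℝ) 1, ContDiffAt ℝ 2 u (γ t) := fun t ht =>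
    hu.contDiffAt (mem_nhds_iff.mpr ⟨Ω, subset_closure, hΩopen, hseg t ht⟩)
  have hγd : ∀ t : ℝ, HasDerivAt γ d t := by
    intro t
    simpa [hγdef] using ((hasDerivAt_id t).smul_const d).const_add y
  have hgraddiff : ∀ t ∈ Icc (0:ℝ) 1,
      HasFDerivAt (gradient u) (fderiv ℝ (gradient u) (γ t)) (γ t) := by
    intro t ht
    have h1 : ContDiffAt ℝ 1 (fderiv ℝ u) (γ t) := (hC2 t ht).fderiv_right (by norm_num)
    have h2 : ContDiffAt ℝ 1 (gradient u) (γ t) :=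
      ((InnerProductSpace.toDual ℝ (EuclideanSpace ℝ (Fin N))).symm.contDiff.contDiffAt).comp
        (γ t) h1
    exact (h2.differentiableAt one_ne_zero).hasFDerivAt
  have hf : ∀ t ∈ Icc (0:ℝ) 1,
      HasDerivAt (fun s => u (γ s)) ⟪gradient u (γ t), d⟫ t := by
    intro t ht
    have hdiff : DifferentiableAt ℝ u (γ t) := (hC2 t ht).differentiableAt (by norm_num)
    have := hdiff.hasFDerivAt.comp_hasDerivAt t (hγd t)
    rwa [fderiv_apply_eq] at this
  have hφ : ∀ t ∈ Icc (0:ℝ) 1,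
      HasDerivAt (fun s => ⟪gradient u (γ s), d⟫) ⟪fderiv ℝ (gradient u) (γ t) d, d⟫ t := by
    intro t ht
    have h1 : HasDerivAt (fun s => gradient u (γ s)) (fderiv ℝ (gradient u) (γ t) d) t :=
      (hgraddiff t ht).comp_hasDerivAt t (hγd t)
    have h2 := HasDerivAt.inner ℝ h1 (hasDerivAt_const t d)
    simpa using h2
  -- Step A : first derivative grows at most linearly
  have hA : ∀ t ∈ Icc (0:ℝ) 1,
      ⟪gradient u (γ t), d⟫ ≤ ⟪gradient u y, d⟫ + Λ * ‖d‖ ^ 2 * t := by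
    have hder : ∀ t ∈ Icc (0:ℝ) 1,
        HasDerivAt (fun s => Λ * ‖d‖ ^ 2 * s - ⟪gradient u (γ s), d⟫)
          (Λ * ‖d‖ ^ 2 - ⟪fderiv ℝ (gradient u) (γ t) d, d⟫) t := by
      intro t ht
      have := ((hasDerivAt_id t).const_mul (Λ * ‖d‖ ^ 2)).sub (hφ t ht)
      rw [mul_one] at this
      exact this
    have hmono : MonotoneOn (fun s => Λ * ‖d‖ ^ 2 * s - ⟪gradient u (γ s), d⟫) (Icc 0 1) := by
      apply monotoneOn_of_deriv_nonneg (convex_Icc 0 1)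
      · exact fun t ht => (hder t ht).continuousAt.continuousWithinAt
      · intro t ht
        rw [interior_Icc] at ht
        exact (hder t ⟨ht.1.le, ht.2.le⟩).differentiableAt.differentiableWithinAt
      · intro t ht
        rw [interior_Icc] at ht
        rw [(hder t ⟨ht.1.le, ht.2.le⟩).deriv]
        have := hΛ (γ t) (hseg t ⟨ht.1.le, ht.2.le⟩) d
        linarith
    intro t ht
    have h0 : (0:ℝ) ∈ Icc (0:ℝ) 1 := left_mem_Icc.mpr zero_le_one
    have := hmono h0 ht ht.1
    simp only [mul_zero, zero_sub, hγ0] at this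
    linarith
  -- Step B : integrate
  have hderB : ∀ t ∈ Icc (0:ℝ) 1,
      HasDerivAt
        (fun s => u (γ s) - ⟪gradient u y, d⟫ * s - Λ * ‖d‖ ^ 2 / 2 * s ^ 2)
        (⟪gradient u (γ t), d⟫ - ⟪gradient u y, d⟫ - Λ * ‖d‖ ^ 2 * t) t := by
    intro t ht
    have h1 := (hf t ht).sub ((hasDerivAt_id t).const_mul ⟪gradient u y, d⟫)
    have h2 := h1.sub ((hasDerivAt_pow 2 t).const_mul (Λ * ‖d‖ ^ 2 / 2))
    exact h2.congr_deriv (by ring)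
  have hanti : AntitoneOn
      (fun s => u (γ s) - ⟪gradient u y, d⟫ * s - Λ * ‖d‖ ^ 2 / 2 * s ^ 2) (Icc 0 1) := by
    apply antitoneOn_of_deriv_nonpos (convex_Icc 0 1)
    · exact fun t ht => (hderB t ht).continuousAt.continuousWithinAt
    · intro t ht
      rw [interior_Icc] at ht
      exact (hderB t ⟨ht.1.le, ht.2.le⟩).differentiableAt.differentiableWithinAt
    · intro t ht
      rw [interior_Icc] at ht
      rw [(hderB t ⟨ht.1.le, ht.2.le⟩).deriv]
      have := hA t ⟨ht.1.le, ht.2.le⟩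
      linarith
  have h01 := hanti (left_mem_Icc.mpr zero_le_one) (right_mem_Icc.mpr zero_le_one) zero_le_one
  simp only [hγ0, hγ1, mul_zero, mul_one, one_pow, zero_pow, sub_zero] at h01
  linarith

/-- Lagrange condition at a boundary maximizer. -/
private lemma lagrange_cond {N : ℕ} {u : EuclideanSpace ℝ (Fin N) → ℝ}
    {x y : EuclideanSpace ℝ (Fin N)} {ε : ℝ} (hε : 0 < ε)
    (hy : ‖y - x‖ = ε) (hdiff : DifferentiableAt ℝ u y)
    (hmax : IsMaxOn u (closedBall x ε) y) :
    gradient u y = (‖gradient u y‖ / ε) • (y - x) := by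
  set n := y - x with hn
  set g := gradient u y with hg
  have hnn : ⟪n, n⟫ = ε ^ 2 := by rw [real_inner_self_eq_norm_sq, hy]
  have hkey : ∀ v : EuclideanSpace ℝ (Fin N), ⟪v, n⟫ < 0 → ⟪g, v⟫ ≤ 0 := by
    intro v hv
    have hmem : v ∈ posTangentConeAt (closedBall x ε) y := by
      apply mem_posTangentConeAt_of_frequently_mem
      apply Filter.Eventually.frequently
      have hub : (0:ℝ) < -2 * ⟪v, n⟫ / (‖v‖ ^ 2 + 1) :=
        div_pos (by linarith) (by positivity)
      filter_upwards [Ioc_mem_nhdsGT hub] with t ht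
      rw [mem_closedBall, dist_eq_norm]
      have heq : y + t • v - x = n + t • v := by rw [hn]; abel
      rw [heq]
      have hsq : ‖n + t • v‖ ^ 2 = ε ^ 2 + 2 * (t * ⟪n, v⟫) + t ^ 2 * ‖v‖ ^ 2 := by
        rw [norm_add_sq_real, real_inner_smul_right, norm_smul, hy]
        rw [mul_pow, Real.norm_eq_abs, sq_abs]
      have hnv : ⟪n, v⟫ = ⟪v, n⟫ := real_inner_comm v n
      have htle : t * (‖v‖ ^ 2 + 1) ≤ -2 * ⟪v, n⟫ := by
        rw [← le_div_iff₀ (by positivity)] at *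
        exact ht.2
      have ht0 : 0 < t := ht.1
      nlinarith [norm_nonneg (n + t • v), sq_nonneg t, norm_nonneg v]
    have h1 := hmax.localize.hasFDerivWithinAt_nonpos hdiff.hasFDerivAt.hasFDerivWithinAt hmem
    rwa [fderiv_apply_eq] at h1
  have hgn : 0 ≤ ⟪g, n⟫ := by
    have h := hkey (-n) (by rw [inner_neg_left]; nlinarith)
    rwa [inner_neg_right, neg_nonpos] at h
  set μ : ℝ := ⟪g, n⟫ / ε ^ 2 with hμ
  set w : EuclideanSpace ℝ (Fin N) := g - μ • n with hw
  have hwn : ⟪w, n⟫ = 0 := by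
    rw [hw, inner_sub_left, real_inner_smul_left, hnn, hμ]
    field_simp
    ring
  have hgw : ⟪g, w⟫ = ‖w‖ ^ 2 := by
    have : g = w + μ • n := by rw [hw]; abel
    have hnw : ⟪n, w⟫ = 0 := (real_inner_comm n w).symm.trans hwn
    rw [this, inner_add_left, real_inner_smul_left, hnw, real_inner_self_eq_norm_sq]
    ring
  have hwzero : w = 0 := by
    have hle : ∀ δ : ℝ, 0 < δ → ‖w‖ ^ 2 ≤ δ * ⟪g, n⟫ := by
      intro δ hδ
      have hv : ⟪w - δ • n, n⟫ < 0 := by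
        rw [inner_sub_left, real_inner_smul_left, hwn, hnn]
        nlinarith [mul_pos hδ (pow_pos hε 2)]
      have := hkey (w - δ • n) hv
      rw [inner_sub_right, real_inner_smul_right, hgw] at this
      linarith
    have hsq : ‖w‖ ^ 2 ≤ 0 := by
      by_contra hpos
      push_neg at hpos
      have hδ : 0 < ‖w‖ ^ 2 / (2 * (⟪g, n⟫ + 1)) := by positivity
      have := hle _ hδ
      have h2 : ‖w‖ ^ 2 / (2 * (⟪g, n⟫ + 1)) * ⟪g, n⟫ < ‖w‖ ^ 2 := by
        rw [div_mul_eq_mul_div, div_lt_iff₀ (by positivity)]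
        nlinarith
      linarith
    have : ‖w‖ = 0 := by nlinarith [norm_nonneg w]
    exact norm_eq_zero.mp this
  have hgform : g = μ • n := by
    rw [hw] at hwzero
    exact sub_eq_zero.mp hwzero
  have hnorm : ‖g‖ = μ * ε := by
    rw [hgform, norm_smul, hy, Real.norm_eq_abs, abs_of_nonneg (by positivity)]
  rw [hnorm, hgform, mul_div_assoc, div_self hε.ne', mul_one]

/-- Unique maximizer on small balls: if `u ∈ C²(closure Ω)` with
`|∇u| ≥ c > 0` and `Λ` bounds the largest eigenvalue of the Hessian, then
for all sufficiently small `ε ∈ (0, c/Λ)` and every `x ∈ Ω` with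
`dist(x, ∂Ω) > ε`, the maximum of `u` over the closed ball `B̄(x,ε)` is
attained at a unique point `y*`, which satisfies `|y* − x| = ε` and
`∇u(y*) = (|∇u(y*)|/ε)(y* − x)`. -/
theorem unique_maximizer_small_ball
    (N : ℕ) (Ω : Set (EuclideanSpace ℝ (Fin N)))
    (hΩopen : IsOpen Ω) (hΩbdd : Bornology.IsBounded Ω) (hΩconn : IsConnected Ω)
    (u : EuclideanSpace ℝ (Fin N) → ℝ)
    (hu : ContDiffOn ℝ 2 u (closure Ω))
    (c : ℝ) (hc : 0 < c)
    (hgrad : ∀ x ∈ closure Ω, c ≤ ‖gradient u x‖)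
    (Λ : ℝ) (hΛpos : 0 < Λ)
    (hΛ : ∀ x ∈ Ω, ∀ v : EuclideanSpace ℝ (Fin N),
      (inner ℝ (fderiv ℝ (gradient u) x v) v : ℝ) ≤ Λ * ‖v‖ ^ 2) :
    ∃ ε₀ : ℝ, 0 < ε₀ ∧ ε₀ ≤ c / Λ ∧
      ∀ ε : ℝ, 0 < ε → ε < ε₀ →
        ∀ x ∈ Ω, ε < infDist x Ωᶜ →
          ∃ y : EuclideanSpace ℝ (Fin N),
            (y ∈ closedBall x ε ∧ IsMaxOn u (closedBall x ε) y)
            ∧ (∀ y' ∈ closedBall x ε, IsMaxOn u (closedBall x ε) y' → y' = y)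
            ∧ ‖y - x‖ = ε
            ∧ gradient u y = (‖gradient u y‖ / ε) • (y - x) := by
  refine ⟨c / Λ, div_pos hc hΛpos, le_refl _, ?_⟩
  intro ε hε hεlt x hx hdist
  have hball : closedBall x ε ⊆ Ω := by
    intro z hz
    by_contra hzΩ
    have h1 : infDist x Ωᶜ ≤ dist x z := infDist_le_dist_of_mem hzΩ
    rw [mem_closedBall, dist_comm] at hz
    linarith
  have hballcl : closedBall x ε ⊆ closure Ω := hball.trans subset_closure
  have hC2 : ∀ z ∈ Ω, ContDiffAt ℝ 2 u z := fun z hz =>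
    hu.contDiffAt (mem_nhds_iff.mpr ⟨Ω, subset_closure, hΩopen, hz⟩)
  obtain ⟨y, hymem, hymax⟩ := (isCompact_closedBall x ε).exists_isMaxOn
    ⟨x, mem_closedBall_self hε.le⟩ ((hu.continuousOn).mono hballcl)
  have hbdry : ∀ y' ∈ closedBall x ε, IsMaxOn u (closedBall x ε) y' → ‖y' - x‖ = ε := by
    intro y' hy' hmax'
    by_contra hne
    have hy'le : ‖y' - x‖ ≤ ε := by rwa [mem_closedBall, dist_eq_norm] at hy'
    have hlt : ‖y' - x‖ < ε := lt_of_le_of_ne hy'le hne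
    have hnhd : closedBall x ε ∈ 𝓝 y' :=
      mem_nhds_iff.mpr ⟨ball x ε, ball_subset_closedBall, isOpen_ball,
        by rwa [mem_ball, dist_eq_norm]⟩
    have h0 : fderiv ℝ u y' = 0 := (hmax'.isLocalMax hnhd).fderiv_eq_zero
    have hgz : gradient u y' = 0 := by
      simp only [gradient, h0, map_zero]
    have := hgrad y' (hballcl hy')
    rw [hgz, norm_zero] at this
    linarith
  have hLagAll : ∀ y' ∈ closedBall x ε, IsMaxOn u (closedBall x ε) y' →
      gradient u y' = (‖gradient u y'‖ / ε) • (y' - x) := fun y' h1 h2 =>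
    lagrange_cond hε (hbdry y' h1 h2) ((hC2 y' (hball h1)).differentiableAt (by norm_num)) h2
  refine ⟨y, ⟨hymem, hymax⟩, ?_, hbdry y hymem hymax, hLagAll y hymem hymax⟩
  intro y' hy'mem hy'max
  have hby : ‖y - x‖ = ε := hbdry y hymem hymax
  have hby' : ‖y' - x‖ = ε := hbdry y' hy'mem hy'max
  have heq : u y' = u y := le_antisymm (hymax hy'mem) (hy'max hymem)
  have hT : u y' ≤ u y + ⟪gradient u y, y' - y⟫ + Λ / 2 * ‖y' - y‖ ^ 2 :=
    taylor_upper Ω hΩopen u hu Λ hΛ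
      (fun t ht => hball ((convex_closedBall x ε).add_smul_sub_mem hymem hy'mem ht))
  have hgy : ⟪gradient u y, y' - y⟫ = ‖gradient u y‖ / ε * ⟪y - x, y' - y⟫ := by
    conv_lhs => rw [hLagAll y hymem hymax]
    exact real_inner_smul_left _ _ _
  have hinner : ⟪y - x, y' - y⟫ = -(1 / 2) * ‖y' - y‖ ^ 2 := by
    have h1 : y' - y = (y' - x) - (y - x) := by abel
    have h2 : ‖y' - y‖ ^ 2 = ‖y' - x‖ ^ 2 - 2 * ⟪y' - x, y - x⟫ + ‖y - x‖ ^ 2 := by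
      rw [h1, norm_sub_sq_real]
    have h3 : ⟪y - x, y' - y⟫ = ⟪y - x, y' - x⟫ - ⟪y - x, y - x⟫ := by
      rw [h1, inner_sub_right]
    rw [real_inner_self_eq_norm_sq] at h3
    have h4 : ⟪y' - x, y - x⟫ = ⟪y - x, y' - x⟫ := real_inner_comm (y - x) (y' - x)
    rw [h3, hby]
    rw [h4, hby, hby'] at h2
    linarith
  have hcle : c ≤ ‖gradient u y‖ := hgrad y (hballcl hymem)
  have hΛε : Λ * ε < c := by
    rw [lt_div_iff₀ hΛpos] at hεlt
    linarith [hεlt]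
  have hsq : ‖y' - y‖ ^ 2 ≤ 0 := by
    rw [hgy, hinner] at hT
    have hgε : Λ < ‖gradient u y‖ / ε := by
      rw [lt_div_iff₀ hε]
      linarith
    nlinarith [sq_nonneg ‖y' - y‖]
  have : ‖y' - y‖ = 0 := by nlinarith [norm_nonneg (y' - y)]
  have := norm_eq_zero.mp this
  exact sub_eq_zero.mp this
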